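/- Let q, d be positive integers and suppose G is a finite graph that admits an orthonormal representation in ℂ^d and whose vertex set can be partitioned into q cliques each of size d. Then the Lovász theta number of G equals q: ϑ(G) = q. -/

import Mathlib

open Finset
open scoped InnerProductSpace

/-- The Lovász theta number of a graph, via orthonormal representations of the
complement with a handle: `ϑ(G) = min_{c,(u_x)} max_x 1/⟨c,u_x⟩²`, where the `u_x` are
unit vectors with `u_x ⊥ u_y` for distinct non-adjacent `x, y` and `c` is a unit vector. -/
noncomputable def lovaszTheta {V : Type*} [Fintype V] (G : SimpleGraph V) : ℝ :=
  sInf {t | ∃ (d : ℕ) (u : V → EuclideanSpace ℝ (Fin d)) (c : EuclideanSpace ℝ (Fin d)),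
    (∀ x, ‖u x‖ = 1) ∧ ‖c‖ = 1 ∧
    (∀ x y, x ≠ y → ¬ G.Adj x y → ⟪u x, u y⟫_ℝ = 0) ∧
    ∀ x, 1 ≤ t * ⟪c, u x⟫_ℝ ^ 2}

private lemma sum_norm_sq_eq_aux {𝕜 : Type*} [RCLike 𝕜] {n : Type*} [Fintype n]
    (v : EuclideanSpace 𝕜 n) : (∑ i, ‖v i‖ ^ 2) = ‖v‖ ^ 2 := by
  rw [EuclideanSpace.norm_eq, Real.sq_sqrt (by positivity)]

set_option maxHeartbeats 1000000 in
theorem lovaszTheta_eq_of_orthonormalRep_and_cliquePartition {V : Type*} [Fintype V]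
    (G : SimpleGraph V) (q d : ℕ) (hq : 1 ≤ q) (hd : 1 ≤ d)
    (Γ : V → EuclideanSpace ℂ (Fin d))
    (hunit : ∀ x, ‖Γ x‖ = 1)
    (horth : ∀ x y, G.Adj x y → ⟪Γ x, Γ y⟫_ℂ = 0)
    (P : Fin q → Finset V)
    (hclique : ∀ i, G.IsClique ((P i : Finset V) : Set V))
    (hsize : ∀ i, (P i).card = d)
    (hpart : ∀ v : V, ∃! i, v ∈ P i) :
    lovaszTheta G = q := by
  classical
  choose f hf hfu using hpart
  have hq0 : (0:ℝ) < q := by exact_mod_cast hq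
  have hd0 : (0:ℝ) < d := by exact_mod_cast hd
  -- cardinality of V
  have hcover : (Finset.univ : Finset V) = Finset.univ.biUnion P := by
    ext v
    constructor
    · intro _
      exact Finset.mem_biUnion.2 ⟨f v, Finset.mem_univ _, hf v⟩
    · intro _
      exact Finset.mem_univ v
  have hdisj : ∀ i ∈ (Finset.univ : Finset (Fin q)), ∀ j ∈ (Finset.univ : Finset (Fin q)),
      i ≠ j → Disjoint (P i) (P j) := by
    intro i _ j _ hij
    refine Finset.disjoint_left.2 fun v hvi hvj => hij ?_
    rw [hfu v i hvi, hfu v j hvj]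
  have hcardV : (Fintype.card V : ℕ) = q * d := by
    have h1 := Finset.card_biUnion hdisj
    rw [← hcover] at h1
    simp only [hsize, Finset.sum_const, Finset.card_univ, Fintype.card_fin, smul_eq_mul] at h1
    exact h1
  -- membership: q is achieved
  have hmem : (q : ℝ) ∈ {t | ∃ (d' : ℕ) (u : V → EuclideanSpace ℝ (Fin d'))
      (c : EuclideanSpace ℝ (Fin d')),
      (∀ x, ‖u x‖ = 1) ∧ ‖c‖ = 1 ∧
      (∀ x y, x ≠ y → ¬ G.Adj x y → ⟪u x, u y⟫_ℝ = 0) ∧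
      ∀ x, 1 ≤ t * ⟪c, u x⟫_ℝ ^ 2} := by
    refine ⟨q, fun x => EuclideanSpace.single (f x) 1,
      (WithLp.toLp 2 (fun _ => (Real.sqrt q)⁻¹) : EuclideanSpace ℝ (Fin q)), ?_, ?_, ?_, ?_⟩
    · intro x
      simp [EuclideanSpace.norm_single]
    · have h2 : (∑ i : Fin q,
          ‖((WithLp.toLp 2 (fun _ => (Real.sqrt q)⁻¹) : EuclideanSpace ℝ (Fin q))) i‖ ^ 2) = 1 := by
        have : ∀ i : Fin q,
            ‖((WithLp.toLp 2 (fun _ => (Real.sqrt q)⁻¹) : EuclideanSpace ℝ (Fin q))) i‖ ^ 2 = (q:ℝ)⁻¹ := by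
          intro i
          simp only [Real.norm_eq_abs, sq_abs]
          rw [inv_pow, Real.sq_sqrt hq0.le]
        rw [Finset.sum_congr rfl fun i _ => this i, Finset.sum_const, Finset.card_univ,
          Fintype.card_fin, nsmul_eq_mul, mul_inv_cancel₀ (ne_of_gt hq0)]
      rw [EuclideanSpace.norm_eq, h2, Real.sqrt_one]
    · intro x y hxy hnadj
      have hfxy : f x ≠ f y := by
        intro h
        exact hnadj (hclique (f y) (by simpa [← h] using hf x) (hf y) hxy)
      rw [EuclideanSpace.inner_single_left]
      simp only [map_one, one_mul, EuclideanSpace.single_apply]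
      rw [if_neg hfxy]
    · intro x
      rw [EuclideanSpace.inner_single_right]
      simp only [one_mul, RCLike.star_def, conj_trivial]
      show 1 ≤ (q:ℝ) * ((Real.sqrt q)⁻¹) ^ 2
      rw [inv_pow, Real.sq_sqrt hq0.le, mul_inv_cancel₀ (ne_of_gt hq0)]
  -- lower bound : every element of the set is ≥ q
  have hlb : ∀ t ∈ {t | ∃ (d' : ℕ) (u : V → EuclideanSpace ℝ (Fin d'))
      (c : EuclideanSpace ℝ (Fin d')),
      (∀ x, ‖u x‖ = 1) ∧ ‖c‖ = 1 ∧
      (∀ x y, x ≠ y → ¬ G.Adj x y → ⟪u x, u y⟫_ℝ = 0) ∧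
      ∀ x, 1 ≤ t * ⟪c, u x⟫_ℝ ^ 2}, (q : ℝ) ≤ t := by
    rintro t ⟨d', u, c, hu1, hc1, huo, ht⟩
    -- t is positive
    have hVne : Nonempty V := by
      have : 0 < Fintype.card V := by rw [hcardV]; positivity
      exact Fintype.card_pos_iff.mp this
    obtain ⟨x0⟩ := hVne
    have htpos : 0 < t := by
      have h1 := ht x0
      nlinarith [sq_nonneg (⟪c, u x0⟫_ℝ)]
    -- the tensor vectors
    set w : V → EuclideanSpace ℂ (Fin d × Fin d') :=
      fun x => WithLp.toLp 2 (fun p : Fin d × Fin d' => Γ x p.1 * (u x p.2 : ℂ)) with hw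
    have hinner : ∀ x y, ⟪w x, w y⟫_ℂ = ⟪Γ x, Γ y⟫_ℂ * ((⟪u x, u y⟫_ℝ : ℝ) : ℂ) := by
      intro x y
      simp only [hw, PiLp.inner_apply, RCLike.inner_apply, conj_trivial]
      rw [Fintype.sum_prod_type]
      push_cast
      rw [Finset.sum_mul_sum]
      apply Finset.sum_congr rfl
      intro a _
      apply Finset.sum_congr rfl
      intro b _
      simp only [map_mul, Complex.conj_ofReal]
      ring
    have hworth : Orthonormal ℂ w := by
      rw [orthonormal_iff_ite]
      intro x y
      rw [hinner]
      by_cases hxy : x = y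
      · subst hxy
        rw [inner_self_eq_norm_sq_to_K, inner_self_eq_norm_sq_to_K, hunit, hu1]
        norm_num
      · simp only [hxy, if_false]
        by_cases hadj : G.Adj x y
        · rw [horth x y hadj, zero_mul]
        · rw [huo x y hxy hadj]
          simp
    -- Bessel with the handles
    have hbessel : ∀ a : Fin d,
        (∑ x : V, ‖Γ x a‖ ^ 2 * ⟪c, u x⟫_ℝ ^ 2) ≤ 1 := by
      intro a
      set h : EuclideanSpace ℂ (Fin d × Fin d') :=
        WithLp.toLp 2 (fun p : Fin d × Fin d' => if p.1 = a then ((c p.2 : ℝ) : ℂ) else 0) with hh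
      have hnormh : ‖h‖ ^ 2 = 1 := by
        rw [← sum_norm_sq_eq_aux h]
        rw [Fintype.sum_prod_type]
        rw [Finset.sum_eq_single a]
        · have h3 : (∑ b : Fin d', ‖h (a, b)‖ ^ 2) = ∑ b : Fin d', ‖c b‖ ^ 2 := by
            apply Finset.sum_congr rfl
            intro b _
            simp [hh]
          rw [h3, sum_norm_sq_eq_aux c, hc1, one_pow]
        · intro a' _ ha'
          apply Finset.sum_eq_zero
          intro b _
          simp [hh, ha']
        · intro habs
          exact absurd (Finset.mem_univ a) habs
      have hih : ∀ x, ⟪w x, h⟫_ℂ = (starRingEnd ℂ) (Γ x a) * ((⟪c, u x⟫_ℝ : ℝ) : ℂ) := by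
        intro x
        simp only [hw, hh, PiLp.inner_apply, RCLike.inner_apply, conj_trivial]
        rw [Fintype.sum_prod_type]
        push_cast
        rw [Finset.sum_eq_single a]
        · rw [Finset.mul_sum]
          apply Finset.sum_congr rfl
          intro b _
          simp only [map_mul, Complex.conj_ofReal, if_true, eq_self_iff_true, ite_true]
          ring
        · intro a' _ ha'
          apply Finset.sum_eq_zero
          intro b _
          simp [ha']
        · intro habs
          exact absurd (Finset.mem_univ a) habs
      have hb := hworth.sum_inner_products_le (s := Finset.univ) h
      calc (∑ x : V, ‖Γ x a‖ ^ 2 * ⟪c, u x⟫_ℝ ^ 2)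
          = ∑ x : V, ‖⟪w x, h⟫_ℂ‖ ^ 2 := by
            apply Finset.sum_congr rfl
            intro x _
            rw [hih x, norm_mul, mul_pow, RCLike.norm_conj, Complex.norm_real,
              Real.norm_eq_abs, sq_abs]
        _ ≤ ‖h‖ ^ 2 := hb
        _ = 1 := hnormh
    -- sum over all coordinates
    have hsum : (∑ x : V, ⟪c, u x⟫_ℝ ^ 2) ≤ d := by
      have h1 : (∑ a : Fin d, ∑ x : V, ‖Γ x a‖ ^ 2 * ⟪c, u x⟫_ℝ ^ 2) ≤ d := by
        calc (∑ a : Fin d, ∑ x : V, ‖Γ x a‖ ^ 2 * ⟪c, u x⟫_ℝ ^ 2)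
            ≤ ∑ _a : Fin d, (1:ℝ) := Finset.sum_le_sum fun a _ => hbessel a
          _ = d := by simp
      calc (∑ x : V, ⟪c, u x⟫_ℝ ^ 2)
          = ∑ x : V, (∑ a : Fin d, ‖Γ x a‖ ^ 2) * ⟪c, u x⟫_ℝ ^ 2 := by
            apply Finset.sum_congr rfl
            intro x _
            rw [sum_norm_sq_eq_aux (Γ x), hunit, one_pow, one_mul]
        _ = ∑ a : Fin d, ∑ x : V, ‖Γ x a‖ ^ 2 * ⟪c, u x⟫_ℝ ^ 2 := by
            rw [Finset.sum_comm]
            apply Finset.sum_congr rfl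
            intro x _
            rw [Finset.sum_mul]
        _ ≤ d := h1
    -- each term is at least 1/t
    have hterm : ∀ x : V, (1:ℝ)/t ≤ ⟪c, u x⟫_ℝ ^ 2 := by
      intro x
      rw [div_le_iff₀ htpos]
      have h2 := ht x
      linarith [mul_comm t (⟪c, u x⟫_ℝ ^ 2)]
    have hlow : (Fintype.card V : ℝ) * (1/t) ≤ ∑ x : V, ⟪c, u x⟫_ℝ ^ 2 := by
      calc (Fintype.card V : ℝ) * (1/t) = ∑ _x : V, (1:ℝ)/t := by
            rw [Finset.sum_const, Finset.card_univ, nsmul_eq_mul]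
        _ ≤ ∑ x : V, ⟪c, u x⟫_ℝ ^ 2 := Finset.sum_le_sum fun x _ => hterm x
    have hfin : ((q * d : ℕ) : ℝ) * (1/t) ≤ d := by
      rw [← hcardV]; exact le_trans hlow hsum
    push_cast at hfin
    rw [mul_one_div, div_le_iff₀ htpos] at hfin
    nlinarith
  -- conclude
  unfold lovaszTheta
  exact le_antisymm (csInf_le ⟨q, hlb⟩ hmem) (le_csInf ⟨q, hmem⟩ hlb)
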